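/- Let A = {0, a_2, ..., a_n} with 0 < a_2 < ... < a_n and gcd(a_2, ..., a_n) = 1, and suppose sA = C_1 ⊔ [c_1, s·a_n - c_2] ⊔ (s·a_n - C_2) for all s ≥ σ. Then c_2 is the conductor of the numerical semigroup Γ_2 = ⟨a_n - a_{n-1}, ..., a_n - a_2, a_n⟩ and C_2 = Γ_2 ∩ [0, c_2 - 2]. -/

import Mathlib

open Finset Pointwise

/-- The s-fold iterated sumset of a finite set of natural numbers; `sumset A 0 = {0}`. -/
def sumset (A : Finset ℕ) : ℕ → Finset ℕ
  | 0 => {0}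
  | s + 1 => A + sumset A s

lemma sumset_add (A : Finset ℕ) (s t : ℕ) :
    sumset A (s + t) = sumset A s + sumset A t := by
  induction s with
  | zero => simp [sumset, Finset.singleton_zero, zero_add]
  | succ s ih =>
    have : s + 1 + t = (s + t) + 1 := by omega
    rw [this, sumset, ih, sumset, add_assoc]

lemma zero_mem_sumset {A : Finset ℕ} (h0 : 0 ∈ A) (s : ℕ) : 0 ∈ sumset A s := by
  induction s with
  | zero => simp [sumset]
  | succ s ih => exact Finset.mem_add.mpr ⟨0, h0, 0, ih, rfl⟩

lemma sumset_mono {A : Finset ℕ} (h0 : 0 ∈ A) {s t : ℕ} (h : s ≤ t) :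
    sumset A s ⊆ sumset A t := by
  obtain ⟨k, rfl⟩ := Nat.exists_eq_add_of_le h
  rw [sumset_add]
  intro x hx
  exact Finset.mem_add.mpr ⟨x, hx, 0, zero_mem_sumset h0 k, add_zero x⟩

lemma sumset_le {A : Finset ℕ} {an : ℕ} (hA : ∀ a ∈ A, a ≤ an) (s : ℕ) :
    ∀ x ∈ sumset A s, x ≤ s * an := by
  induction s with
  | zero => simp [sumset]
  | succ s ih =>
    intro x hx
    obtain ⟨a, ha, y, hy, rfl⟩ := Finset.mem_add.mp hx
    have := hA a ha
    have := ih y hy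
    have : (s + 1) * an = s * an + an := by ring
    omega

lemma sumset_reflect (A : Finset ℕ) (an : ℕ) (hA : ∀ a ∈ A, a ≤ an) (s : ℕ) :
    sumset (A.image (fun a => an - a)) s = (sumset A s).image (fun x => s * an - x) := by
  induction s with
  | zero => simp [sumset]
  | succ s ih =>
    rw [sumset, sumset, ih]
    ext y
    simp only [Finset.mem_add, Finset.mem_image, Nat.succ_mul]
    constructor
    · rintro ⟨b, ⟨a, ha, rfl⟩, z, ⟨x, hx, rfl⟩, rfl⟩
      refine ⟨a + x, ⟨a, ha, x, hx, rfl⟩, ?_⟩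
      have h1 := hA a ha
      have h2 := sumset_le hA s x hx
      omega
    · rintro ⟨y, ⟨a, ha, x, hx, rfl⟩, rfl⟩
      refine ⟨an - a, ⟨a, ha, rfl⟩, s * an - x, ⟨x, hx, rfl⟩, ?_⟩
      have h1 := hA a ha
      have h2 := sumset_le hA s x hx
      omega

lemma mem_closure_iff_sumset (B : Finset ℕ) (h0 : 0 ∈ B) (x : ℕ) :
    x ∈ AddSubmonoid.closure (B : Set ℕ) ↔ ∃ s, x ∈ sumset B s := by
  constructor
  · intro hx
    induction hx using AddSubmonoid.closure_induction with
    | mem b hb => exact ⟨1, Finset.mem_add.mpr ⟨b, hb, 0, by simp [sumset], add_zero b⟩⟩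
    | zero => exact ⟨0, by simp [sumset]⟩
    | add x y _ _ hx hy =>
      obtain ⟨s, hs⟩ := hx
      obtain ⟨t, ht⟩ := hy
      exact ⟨s + t, by rw [sumset_add]; exact Finset.mem_add.mpr ⟨x, hs, y, ht, rfl⟩⟩
  · rintro ⟨s, hs⟩
    induction s generalizing x with
    | zero => simp [sumset] at hs; exact hs ▸ zero_mem _
    | succ s ih =>
      obtain ⟨b, hb, y, hy, rfl⟩ := Finset.mem_add.mp hs
      exact add_mem (AddSubmonoid.subset_closure hb) (ih y hy)

theorem stmt10 (A : Finset ℕ) (h0 : 0 ∈ A) (hn : 2 ≤ A.card) (hgcd : A.gcd id = 1)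
    (an : ℕ) (han : an = A.max' ⟨0, h0⟩)
    (σ c1 c2 : ℕ) (C1 C2 : Finset ℕ)
    (hC1 : ∀ x ∈ C1, x + 2 ≤ c1) (hC2 : ∀ x ∈ C2, x + 2 ≤ c2)
    (hdec : ∀ s ≥ σ,
      sumset A s = C1 ∪ Finset.Icc c1 (s * an - c2) ∪ C2.image (fun c => s * an - c) ∧
      Disjoint C1 (Finset.Icc c1 (s * an - c2)) ∧
      Disjoint C1 (C2.image (fun c => s * an - c)) ∧
      Disjoint (Finset.Icc c1 (s * an - c2)) (C2.image (fun c => s * an - c)))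
    (Γ2 : AddSubmonoid ℕ)
    (hΓ2 : Γ2 = AddSubmonoid.closure ((A.image (fun a => an - a) : Finset ℕ) : Set ℕ)) :
    (∀ m : ℕ, c2 ≤ m → m ∈ Γ2) ∧
    (∀ c : ℕ, (∀ m : ℕ, c ≤ m → m ∈ Γ2) → c2 ≤ c) ∧
    (∀ x : ℕ, x ∈ C2 ↔ x ∈ Γ2 ∧ x + 2 ≤ c2) := by
  have hanA : an ∈ A := han ▸ A.max'_mem ⟨0, h0⟩
  have hAle : ∀ a ∈ A, a ≤ an := fun a ha => han ▸ A.le_max' a ha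
  have han1 : 1 ≤ an := by
    obtain ⟨a, ha, b, hb, hab⟩ := Finset.one_lt_card.mp hn
    rcases Nat.eq_zero_or_pos a with h | h
    · have := hAle b hb; omega
    · have := hAle a ha; omega
  set B := A.image (fun a => an - a) with hB
  have h0B : 0 ∈ B := Finset.mem_image.mpr ⟨an, hanA, Nat.sub_self an⟩
  have hmem : ∀ x : ℕ, x ∈ Γ2 ↔ ∃ s, x ∈ sumset B s := by
    intro x
    rw [hΓ2]
    exact mem_closure_iff_sumset B h0B x
  have hrefl := sumset_reflect A an hAle
  -- Part 1
  have part1 : ∀ m : ℕ, c2 ≤ m → m ∈ Γ2 := by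
    intro m hm
    set s := σ + m + c1 + c2 + 1 with hs
    have hsσ : s ≥ σ := by omega
    have hsan : m + c1 + c2 ≤ s * an := le_trans (by omega) (Nat.le_mul_of_pos_right s han1)
    obtain ⟨heq, -, -, -⟩ := hdec s hsσ
    have hx : s * an - m ∈ sumset A s := by
      rw [heq]
      refine Finset.mem_union_left _ (Finset.mem_union_right _ ?_)
      rw [Finset.mem_Icc]; omega
    rw [hmem]
    refine ⟨s, ?_⟩
    rw [hrefl s]
    exact Finset.mem_image.mpr ⟨s * an - m, hx, by omega⟩
  -- Part 2
  have part2 : ∀ c : ℕ, (∀ m : ℕ, c ≤ m → m ∈ Γ2) → c2 ≤ c := by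
    intro c hc
    by_contra hlt
    push_neg at hlt
    have h1 : c2 - 1 ∈ Γ2 := hc _ (by omega)
    obtain ⟨s0, hs0⟩ := (hmem _).mp h1
    set s := s0 + σ + c1 + c2 + 1 with hsdef
    have hs : c2 - 1 ∈ sumset B s := sumset_mono h0B (by omega) hs0
    have hsan : c1 + c2 + 1 ≤ s * an := le_trans (by omega) (Nat.le_mul_of_pos_right s han1)
    rw [hrefl s] at hs
    obtain ⟨x, hx, hxe⟩ := Finset.mem_image.mp hs
    have hxle : x ≤ s * an := sumset_le hAle s x hx
    obtain ⟨heq, -, -, -⟩ := hdec s (by omega)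
    rw [heq] at hx
    rcases Finset.mem_union.mp hx with hx | hx
    · rcases Finset.mem_union.mp hx with hx | hx
      · have := hC1 x hx; omega
      · rw [Finset.mem_Icc] at hx; omega
    · obtain ⟨y, hy, hye⟩ := Finset.mem_image.mp hx
      have := hC2 y hy
      omega
  refine ⟨part1, part2, ?_⟩
  -- Part 3
  intro x
  constructor
  · intro hx
    have hx2 := hC2 x hx
    refine ⟨?_, hx2⟩
    set s := σ + x + c1 + c2 + 1 with hsdef
    have hsan : x + c1 + c2 ≤ s * an := le_trans (by omega) (Nat.le_mul_of_pos_right s han1)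
    obtain ⟨heq, -, -, -⟩ := hdec s (by omega)
    have hmemA : s * an - x ∈ sumset A s := by
      rw [heq]
      exact Finset.mem_union_right _ (Finset.mem_image.mpr ⟨x, hx, rfl⟩)
    rw [hmem]
    refine ⟨s, ?_⟩
    rw [hrefl s]
    exact Finset.mem_image.mpr ⟨s * an - x, hmemA, by omega⟩
  · rintro ⟨hxΓ, hx2⟩
    obtain ⟨s0, hs0⟩ := (hmem _).mp hxΓ
    set s := s0 + σ + x + c1 + c2 + 1 with hsdef
    have hs : x ∈ sumset B s := sumset_mono h0B (by omega) hs0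
    have hsan : x + c1 + c2 + 1 ≤ s * an := le_trans (by omega) (Nat.le_mul_of_pos_right s han1)
    rw [hrefl s] at hs
    obtain ⟨y, hy, hye⟩ := Finset.mem_image.mp hs
    have hyle : y ≤ s * an := sumset_le hAle s y hy
    have hyval : y = s * an - x := by omega
    obtain ⟨heq, -, -, -⟩ := hdec s (by omega)
    rw [heq] at hy
    rcases Finset.mem_union.mp hy with hy | hy
    · rcases Finset.mem_union.mp hy with hy | hy
      · have := hC1 y hy; omega
      · rw [Finset.mem_Icc] at hy; omega
    · obtain ⟨c, hc, hce⟩ := Finset.mem_image.mp hy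
      have hcc := hC2 c hc
      have : x = c := by omega
      exact this ▸ hc
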